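/- The (d−1)-fold left product of i.i.d. copies of the cyclic-shift matrix is entrywise positive with positive probability: if X(1), …, X(d−1) are i.i.d. copies of the matrix X with X_{k,k} = U_k, X_{k,k+1 (mod d)} = 1 − U_k (U_k i.i.d. uniform on (0,1)) and zeros elsewhere, then P(X(d−1)⋯X(1) has all entries positive) > 0. -/

import Mathlib

open MeasureTheory ProbabilityTheory

lemma list_prod_nonneg {N : ℕ} (L : List (Matrix (Fin N) (Fin N) ℝ))
    (h : ∀ M ∈ L, ∀ i j, 0 ≤ M i j) : ∀ i j, 0 ≤ L.prod i j := by
  induction L with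
  | nil =>
      intro i j
      simp only [List.prod_nil, Matrix.one_apply]
      positivity
  | cons M L' ih =>
      intro i j
      rw [List.prod_cons, Matrix.mul_apply]
      refine Finset.sum_nonneg fun k _ => mul_nonneg ?_ ?_
      · exact h M (List.mem_cons_self) i k
      · exact ih (fun M' hM' => h M' (List.mem_cons_of_mem _ hM')) k j

open scoped Fin.NatCast Fin.CommRing in
lemma list_prod_pos {N : ℕ} [NeZero N] (L : List (Matrix (Fin N) (Fin N) ℝ))
    (h : ∀ M ∈ L, (∀ i j, 0 ≤ M i j) ∧ (∀ k, 0 < M k k) ∧ (∀ k, 0 < M k (k + 1))) :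
    ∀ t : ℕ, t ≤ L.length → ∀ i : Fin N, 0 < L.prod i (i + (t : Fin N)) := by
  induction L with
  | nil =>
      intro t ht i
      have ht0 : t = 0 := by simpa using ht
      subst ht0
      simp [Matrix.one_apply]
  | cons M L' ih =>
      intro t ht i
      have hM := h M (List.mem_cons_self)
      have hL' : ∀ M' ∈ L', (∀ i j, 0 ≤ M' i j) ∧ (∀ k, 0 < M' k k) ∧
          (∀ k, 0 < M' k (k + 1)) := fun M' hM' => h M' (List.mem_cons_of_mem _ hM')
      have hP : ∀ i j, 0 ≤ L'.prod i j :=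
        list_prod_nonneg L' (fun M' hM' => (hL' M' hM').1)
      rw [List.prod_cons, Matrix.mul_apply]
      have hnn : ∀ k ∈ Finset.univ, 0 ≤ M i k * L'.prod k (i + (t : Fin N)) :=
        fun k _ => mul_nonneg (hM.1 i k) (hP _ _)
      by_cases hle : t ≤ L'.length
      · refine Finset.sum_pos' hnn ⟨i, Finset.mem_univ _, ?_⟩
        exact mul_pos (hM.2.1 i) (ih hL' t hle i)
      · have ht' : t = L'.length + 1 := by
          simp only [List.length_cons] at ht; omega
        subst ht'
        refine Finset.sum_pos' hnn ⟨i + 1, Finset.mem_univ _, ?_⟩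
        have hcast : i + ((L'.length + 1 : ℕ) : Fin N) = (i + 1) + ((L'.length : ℕ) : Fin N) := by
          push_cast
          ring
        rw [hcast]
        exact mul_pos (hM.2.2 i) (ih hL' L'.length le_rfl (i + 1))

/-- For the cyclic-shift matrix in dimension `d + 2`, the `(d+1)`-fold left
product `X(d-1)⋯X(1)` of i.i.d. copies (here the dimension is `d+2` and there
are `(d+2)-1 = d+1` factors) is entrywise positive with positive
probability. -/
theorem cyclic_shift_product_positive
    {Ω : Type*} [MeasureSpace Ω] [IsProbabilityMeasure (ℙ : Measure Ω)]
    (d : ℕ)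
    (U : Fin (d + 1) → Ω → Fin (d + 2) → ℝ) (hU : ∀ n, Measurable (U n))
    (hUlaw : ∀ n, Measure.map (U n) ℙ
      = Measure.pi (fun _ => (volume : Measure ℝ).restrict (Set.Ioo 0 1)))
    (hUindep : iIndepFun U ℙ)
    (X : Fin (d + 1) → Ω → Matrix (Fin (d + 2)) (Fin (d + 2)) ℝ)
    (hXdef : ∀ n ω k j, X n ω k j =
      if j = k then U n ω k else if j = k + 1 then 1 - U n ω k else 0) :
    0 < ℙ {ω | ∀ i j,
      0 < ((List.ofFn fun n => X n ω).reverse.prod) i j} := by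
  -- the set S of functions with all values in (0,1)
  set S : Set (Fin (d + 2) → ℝ) := Set.pi Set.univ (fun _ => Set.Ioo 0 1) with hS
  have hSmeas : MeasurableSet S := MeasurableSet.univ_pi (fun _ => measurableSet_Ioo)
  -- each event A n has probability 1
  have hAn : ∀ n, ℙ ((U n) ⁻¹' S) = 1 := by
    intro n
    rw [← Measure.map_apply (hU n) hSmeas, hUlaw n, hS, Measure.pi_pi]
    simp [Measure.restrict_apply measurableSet_Ioo, Real.volume_Ioo]
  set A : Set Ω := ⋂ n, (U n) ⁻¹' S with hA
  have hAmeas : MeasurableSet A := MeasurableSet.iInter fun n => (hU n) hSmeas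
  have hA1 : ℙ A = 1 := by
    have hc : ℙ Aᶜ = 0 := by
      rw [hA, Set.compl_iInter]
      refine measure_iUnion_null fun n => ?_
      have := hAn n
      have : ℙ ((U n ⁻¹' S)ᶜ) = 0 := by
        rw [measure_compl ((hU n) hSmeas) (measure_ne_top _ _), hAn n, measure_univ]
        simp
      exact this
    have := measure_add_measure_compl hAmeas (μ := (ℙ : Measure Ω))
    rw [hc, add_zero, measure_univ] at this
    exact this
  -- A is contained in the target event
  have hsub : A ⊆ {ω | ∀ i j, 0 < ((List.ofFn fun n => X n ω).reverse.prod) i j} := by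
    intro ω hω i j
    have hωU : ∀ n k, U n ω k ∈ Set.Ioo (0 : ℝ) 1 := by
      intro n k
      have := Set.mem_iInter.1 hω n
      exact this k (Set.mem_univ _)
    set L := (List.ofFn fun n => X n ω).reverse with hL
    have hmem : ∀ M ∈ L, (∀ a b, 0 ≤ M a b) ∧ (∀ k, 0 < M k k) ∧
        (∀ k, 0 < M k (k + 1)) := by
      intro M hM
      rw [hL, List.mem_reverse, List.mem_ofFn] at hM
      obtain ⟨n, rfl⟩ := hM
      have hne : ∀ k : Fin (d + 2), k + 1 ≠ k := by
        intro k hk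
        have h0 : k + 1 = k + 0 := by simpa using hk
        exact one_ne_zero (add_left_cancel h0)
      refine ⟨fun a b => ?_, fun k => ?_, fun k => ?_⟩
      · show (0:ℝ) ≤ X n ω a b
        rw [hXdef]
        split_ifs with h1 h2
        · exact (hωU n a).1.le
        · linarith [(hωU n a).2]
        · exact le_refl 0
      · show (0:ℝ) < X n ω k k
        rw [hXdef]
        simp only [if_pos rfl]
        exact (hωU n k).1
      · show (0:ℝ) < X n ω k (k + 1)
        rw [hXdef, if_neg (hne k), if_pos rfl]
        linarith [(hωU n k).2]
    have hlen : L.length = d + 1 := by simp [hL]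
    have ht : ((j - i : Fin (d + 2)).val : ℕ) ≤ L.length := by
      rw [hlen]; omega
    have h := list_prod_pos L hmem (j - i).val ht i
    open scoped Fin.NatCast Fin.CommRing in
    have hij : i + (((j - i).val : ℕ) : Fin (d + 2)) = j := by
      rw [Fin.cast_val_eq_self]; ring
    rwa [hij] at h
  calc (0 : ENNReal) < 1 := by norm_num
    _ = ℙ A := hA1.symm
    _ ≤ _ := measure_mono hsub
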